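/- Let V > 0, T a positive integer, and suppose a soft-reset IF neuron receives constant input c with 0 < c ≤ V and initial potential v(0) ∈ [0, V]. Then the total spike count ∑_{t=1}^T s(t) equals ⌊(T·c + v(0))/V⌋ whenever (T·c + v(0))/V is not an integer, in particular N(T) := ∑_{t=1}^T s(t) satisfies ⌊(Tc + v(0))/V⌋ - 1 ≤ N(T) ≤ ⌊(Tc + v(0))/V⌋ in general. -/

import Mathlib

theorem stmt_13 (V : ℝ) (hV : 0 < V) (T : ℕ) (hT : 1 ≤ T) (c : ℝ) (hc : 0 < c ∧ c ≤ V)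
    (v s : ℕ → ℝ)
    (hs : ∀ t, 1 ≤ t → s t = if V < v (t - 1) + c then 1 else 0)
    (hv : ∀ t, 1 ≤ t → v t = v (t - 1) + c - s t * V)
    (hv0 : 0 ≤ v 0 ∧ v 0 ≤ V) :
    ((¬ ∃ n : ℤ, (T * c + v 0) / V = n) →
        (∑ t ∈ Finset.Icc 1 T, s t) = (⌊(T * c + v 0) / V⌋ : ℝ)) ∧
      (⌊(T * c + v 0) / V⌋ : ℝ) - 1 ≤ (∑ t ∈ Finset.Icc 1 T, s t) ∧
        (∑ t ∈ Finset.Icc 1 T, s t) ≤ (⌊(T * c + v 0) / V⌋ : ℝ) := by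
  obtain ⟨hc1, hc2⟩ := hc
  obtain ⟨hv01, hv02⟩ := hv0
  have key : ∀ t : ℕ, (v t = v 0 + t * c - (∑ i ∈ Finset.Icc 1 t, s i) * V) ∧
      (0 ≤ v t ∧ v t ≤ V) ∧ ∃ m : ℤ, (∑ i ∈ Finset.Icc 1 t, s i) = m := by
    intro t
    induction t with
    | zero => refine ⟨by simp, ⟨hv01, hv02⟩, 0, by simp⟩
    | succ n ih =>
      obtain ⟨hveq, ⟨hpos, hle⟩, m, hm⟩ := ih
      have hs' := hs (n+1) (by omega)
      have hv' := hv (n+1) (by omega)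
      simp only [Nat.add_sub_cancel] at hs' hv'
      have hsum : (∑ i ∈ Finset.Icc 1 (n+1), s i) = (∑ i ∈ Finset.Icc 1 n, s i) + s (n+1) :=
        Finset.sum_Icc_succ_top (by omega) s
      by_cases h : V < v n + c
      · rw [if_pos h] at hs'
        refine ⟨?_, ⟨?_, ?_⟩, ⟨m + 1, ?_⟩⟩
        · rw [hv', hs', hsum, hs', hveq]; push_cast; ring
        · rw [hv', hs']; linarith
        · rw [hv', hs']; linarith
        · rw [hsum, hs', hm]; push_cast; ring
      · rw [if_neg h] at hs'
        refine ⟨?_, ⟨?_, ?_⟩, ⟨m, ?_⟩⟩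
        · rw [hv', hs', hsum, hs', hveq]; push_cast; ring
        · rw [hv', hs']; linarith
        · rw [hv', hs']; linarith
        · rw [hsum, hs', hm]; ring
  obtain ⟨hvT, ⟨hTpos, hTle⟩, m, hm⟩ := key T
  set x : ℝ := (T * c + v 0) / V with hx
  have hmV : (m : ℝ) * V = T * c + v 0 - v T := by rw [← hm]; linarith
  have h1 : (m : ℝ) ≤ x := by
    rw [hx, le_div_iff₀ hV]; linarith
  have h2 : x - 1 ≤ m := by
    rw [hx, sub_le_iff_le_add, div_le_iff₀ hV]; linarith
  have hfl : m ≤ ⌊x⌋ := Int.le_floor.mpr h1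
  have hflR : (m : ℝ) ≤ (⌊x⌋ : ℝ) := by exact_mod_cast hfl
  have hfle : (⌊x⌋ : ℝ) ≤ x := Int.floor_le x
  refine ⟨?_, by rw [hm]; linarith, by rw [hm]; linarith⟩
  intro hni
  rw [hm]
  by_contra hne
  have hmne : m ≠ ⌊x⌋ := fun h => hne (by rw [h])
  have hlt : m ≤ ⌊x⌋ - 1 := by omega
  have : (m : ℝ) ≤ (⌊x⌋ : ℝ) - 1 := by exact_mod_cast hlt
  have hxe : x = (m : ℝ) + 1 := by linarith
  exact hni ⟨m + 1, by push_cast; linarith⟩
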